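/- Lemma D.1 (uniform convergence of product Gaussian densities). Let a > 1/(2π), and let v : ℕ → ℕ → ℝ and w : ℕ → ℝ satisfy v(n, i) ≥ a for all n, i ∈ ℕ and lim_{n→∞} v(n, i) = w(i) for every i ∈ ℕ. Then the product Gaussian densities converge uniformly both in the argument and in the dimension: for every ε > 0 there exists N ∈ ℕ such that for all n ≥ N, all k ≥ 1 and all x ∈ ℝ^k, |Φ^k_{v(n,·)}(x) − Φ^k_{w}(x)| < ε. -/

import Mathlib

open Filter Topology

/-- The centered Gaussian density with variance `v`:
`φ_v(x) = (2π v)^{-1/2} · exp(−x² / (2v))`. -/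
noncomputable def gaussDensity (v x : ℝ) : ℝ :=
  (1 / Real.sqrt (2 * Real.pi * v)) * Real.exp (-(x ^ 2) / (2 * v))

/-- The joint density of a `k`-dimensional Gaussian vector with independent zero-mean
entries of variances `u 0, …, u (k−1)`: `Φ^k_u(x) = ∏_{i<k} φ_{u i}(x i)`. -/
noncomputable def prodGaussDensity (u : ℕ → ℝ) {k : ℕ} (x : Fin k → ℝ) : ℝ :=
  ∏ i : Fin k, gaussDensity (u (i : ℕ)) (x i)

lemma gaussDensity_nonneg (v x : ℝ) : 0 ≤ gaussDensity v x := by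
  unfold gaussDensity; positivity

lemma gaussDensity_le (a u x : ℝ) (ha : 0 < a) (hu : a ≤ u) :
    gaussDensity u x ≤ 1 / Real.sqrt (2 * Real.pi * a) := by
  have hπ := Real.pi_pos
  have h1 : Real.exp (-(x ^ 2) / (2 * u)) ≤ 1 := by
    rw [Real.exp_le_one_iff]
    apply div_nonpos_of_nonpos_of_nonneg (neg_nonpos.mpr (sq_nonneg x)) (by nlinarith)
  have h2 : 1 / Real.sqrt (2 * Real.pi * u) ≤ 1 / Real.sqrt (2 * Real.pi * a) :=
    one_div_le_one_div_of_le (Real.sqrt_pos.2 (by positivity))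
      (Real.sqrt_le_sqrt (by nlinarith))
  calc gaussDensity u x ≤ (1 / Real.sqrt (2 * Real.pi * u)) * 1 := by
        unfold gaussDensity
        exact mul_le_mul_of_nonneg_left h1 (by positivity)
    _ = 1 / Real.sqrt (2 * Real.pi * u) := mul_one _
    _ ≤ _ := h2

lemma exp_diff_le (a u u' x : ℝ) (ha : 0 < a) (hu : a ≤ u) (hu' : a ≤ u') :
    |Real.exp (-(x ^ 2) / (2 * u)) - Real.exp (-(x ^ 2) / (2 * u'))| ≤ |u - u'| / a := by
  wlog h : u ≤ u' generalizing u u'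
  · rw [abs_sub_comm, abs_sub_comm u u']
    exact this u' u hu' hu (le_of_not_ge h)
  have hu0 : 0 < u := ha.trans_le hu
  have hu'0 : 0 < u' := ha.trans_le hu'
  have hle : -(x ^ 2) / (2 * u) ≤ -(x ^ 2) / (2 * u') := by
    rw [neg_div, neg_div, neg_le_neg_iff]
    exact div_le_div_of_nonneg_left (sq_nonneg x) (by linarith) (by linarith)
  have hE : Real.exp (-(x ^ 2) / (2 * u)) ≤ Real.exp (-(x ^ 2) / (2 * u')) :=
    Real.exp_le_exp.2 hle
  rw [abs_of_nonpos (by linarith), abs_of_nonpos (by linarith)]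
  -- goal: exp(-x²/(2u')) - exp(-x²/(2u)) ≤ (u' - u)/a
  set d : ℝ := x ^ 2 / (2 * u) - x ^ 2 / (2 * u') with hd
  have hd0 : 0 ≤ d := by
    have h2 := hle
    rw [neg_div, neg_div, neg_le_neg_iff] at h2
    exact sub_nonneg.mpr h2
  have hsplit : Real.exp (-(x ^ 2) / (2 * u)) =
      Real.exp (-(x ^ 2) / (2 * u')) * Real.exp (-d) := by
    rw [← Real.exp_add, hd]; ring_nf
  have h1md : 1 - Real.exp (-d) ≤ d := by
    have := Real.add_one_le_exp (-d); linarith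
  have hEpos : 0 < Real.exp (-(x ^ 2) / (2 * u')) := Real.exp_pos _
  have hbound : Real.exp (-(x ^ 2) / (2 * u')) - Real.exp (-(x ^ 2) / (2 * u)) ≤
      Real.exp (-(x ^ 2) / (2 * u')) * d := by
    rw [hsplit]
    calc Real.exp (-(x ^ 2) / (2 * u')) - Real.exp (-(x ^ 2) / (2 * u')) * Real.exp (-d)
        = Real.exp (-(x ^ 2) / (2 * u')) * (1 - Real.exp (-d)) := by ring
      _ ≤ Real.exp (-(x ^ 2) / (2 * u')) * d :=
          mul_le_mul_of_nonneg_left h1md hEpos.le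
  -- now bound exp(-x²/(2u')) * d ≤ (u'-u)/u ≤ (u'-u)/a
  have ht : x ^ 2 / (2 * u') * Real.exp (-(x ^ 2) / (2 * u')) ≤ 1 := by
    set t : ℝ := x ^ 2 / (2 * u') with htdef
    have ht0 : 0 ≤ t := by positivity
    have := Real.add_one_le_exp t
    have hexp : Real.exp (-t) = 1 / Real.exp t := by
      rw [Real.exp_neg]; ring
    rw [show -(x^2)/(2*u') = -t by rw [htdef]; ring, hexp]
    rw [mul_one_div, div_le_one (Real.exp_pos t)]
    linarith
  have hdval : d = x ^ 2 / (2 * u') * ((u' - u) / u) := by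
    rw [hd]
    field_simp
  have key : Real.exp (-(x ^ 2) / (2 * u')) * d ≤ (u' - u) / u := by
    rw [hdval]
    have h1 : Real.exp (-(x ^ 2) / (2 * u')) * (x ^ 2 / (2 * u') * ((u' - u) / u))
        = (x ^ 2 / (2 * u') * Real.exp (-(x ^ 2) / (2 * u'))) * ((u' - u) / u) := by ring
    rw [h1]
    calc (x ^ 2 / (2 * u') * Real.exp (-(x ^ 2) / (2 * u'))) * ((u' - u) / u)
        ≤ 1 * ((u' - u) / u) :=
          mul_le_mul_of_nonneg_right ht (div_nonneg (by linarith) hu0.le)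
      _ = (u' - u) / u := one_mul _
  have last : (u' - u) / u ≤ (u' - u) / a :=
    div_le_div_of_nonneg_left (by linarith) ha hu
  have hridge : -(u - u') / a = (u' - u) / a := by ring
  rw [hridge]
  linarith

lemma gaussDensity_diff_le (a u u' x : ℝ) (ha : 1 / (2 * Real.pi) < a)
    (hu : a ≤ u) (hu' : a ≤ u') :
    |gaussDensity u x - gaussDensity u' x| ≤ 2 / a * |u - u'| := by
  have hπ := Real.pi_pos
  have ha0 : 0 < a := lt_trans (by positivity) ha
  have h2pa : 1 < 2 * Real.pi * a := by
    rw [div_lt_iff₀ (by positivity)] at ha; nlinarith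
  have hu0 : 0 < u := ha0.trans_le hu
  have hu'0 : 0 < u' := ha0.trans_le hu'
  set b : ℝ := Real.sqrt (2 * Real.pi * a) with hbdef
  have hb1 : 1 < b := by
    rw [hbdef, show (1:ℝ) = Real.sqrt 1 by simp]
    exact Real.sqrt_lt_sqrt (by norm_num) h2pa
  set s : ℝ := Real.sqrt (2 * Real.pi * u) with hsdef
  set s' : ℝ := Real.sqrt (2 * Real.pi * u') with hs'def
  have hsb : b ≤ s := Real.sqrt_le_sqrt (by nlinarith)
  have hs'b : b ≤ s' := Real.sqrt_le_sqrt (by nlinarith)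
  have hs0 : 0 < s := by linarith
  have hs'0 : 0 < s' := by linarith
  have hssq : s ^ 2 = 2 * Real.pi * u := Real.sq_sqrt (by positivity)
  have hs'sq : s' ^ 2 = 2 * Real.pi * u' := Real.sq_sqrt (by positivity)
  set E : ℝ := Real.exp (-(x ^ 2) / (2 * u)) with hEdef
  set E' : ℝ := Real.exp (-(x ^ 2) / (2 * u')) with hE'def
  have hE0 : 0 < E := Real.exp_pos _
  have hE'0 : 0 < E' := Real.exp_pos _
  have hE1 : E ≤ 1 := by
    rw [hEdef, Real.exp_le_one_iff]
    exact div_nonpos_of_nonpos_of_nonneg (neg_nonpos.mpr (sq_nonneg x)) (by linarith)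
  -- bound on |1/s - 1/s'|
  have hsdiff : |s - s'| * (s + s') ≤ 2 * Real.pi * |u - u'| := by
    have : (s - s') * (s + s') = 2 * Real.pi * (u - u') := by
      have : s ^ 2 - s' ^ 2 = 2 * Real.pi * (u - u') := by rw [hssq, hs'sq]; ring
      nlinarith [this]
    have heq : |s - s'| * (s + s') = 2 * Real.pi * |u - u'| := by
      rw [← abs_of_pos (show (0:ℝ) < s + s' by linarith), ← abs_mul, this, abs_mul,
        abs_of_pos (show (0:ℝ) < 2 * Real.pi by positivity)]
    exact le_of_eq heq
  have hinv : |1 / s - 1 / s'| ≤ |u - u'| / a := by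
    have heq : 1 / s - 1 / s' = (s' - s) / (s * s') := by field_simp
    rw [heq, abs_div, abs_of_pos (by positivity : (0:ℝ) < s * s'), abs_sub_comm]
    rw [div_le_div_iff₀ (by positivity) ha0]
    -- |s - s'| * a ≤ |u - u'| * (s * s')
    have h1 : |s - s'| ≤ 2 * Real.pi * |u - u'| / (s + s') := by
      rw [le_div_iff₀ (by linarith)]; exact hsdiff
    have h2 : 2 * Real.pi * |u - u'| / (s + s') ≤ 2 * Real.pi * |u - u'| / 2 := by
      apply div_le_div_of_nonneg_left (by positivity) (by norm_num)
      linarith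
    have hss' : 2 * Real.pi * a ≤ s * s' := by
      have hbb : b * b = 2 * Real.pi * a :=
        Real.mul_self_sqrt (by positivity)
      calc 2 * Real.pi * a = b * b := hbb.symm
        _ ≤ s * s' := mul_le_mul hsb hs'b (by linarith) hs0.le
    nlinarith [abs_nonneg (u - u')]
  -- bound on |E - E'|
  have hexp : |E - E'| ≤ |u - u'| / a := exp_diff_le a u u' x ha0 hu hu'
  have hsplit : gaussDensity u x - gaussDensity u' x
      = E * (1 / s - 1 / s') + (E - E') * (1 / s') := by
    unfold gaussDensity
    rw [← hsdef, ← hs'def, ← hEdef, ← hE'def]; ring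
  rw [hsplit]
  have hs'1 : 1 / s' ≤ 1 := by
    rw [div_le_one hs'0]; linarith
  calc |E * (1 / s - 1 / s') + (E - E') * (1 / s')|
      ≤ |E * (1 / s - 1 / s')| + |(E - E') * (1 / s')| := abs_add_le _ _
    _ = E * |1 / s - 1 / s'| + |E - E'| * (1 / s') := by
        rw [abs_mul, abs_mul, abs_of_pos hE0, abs_of_pos (by positivity : (0:ℝ) < 1 / s')]
    _ ≤ 1 * (|u - u'| / a) + (|u - u'| / a) * 1 := by
        apply add_le_add
        · exact mul_le_mul hE1 hinv (abs_nonneg _) (by norm_num)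
        · exact mul_le_mul hexp hs'1 (by positivity) (by positivity)
    _ = 2 / a * |u - u'| := by ring

lemma prod_abs_sub_le {k : ℕ} (f g : Fin k → ℝ)
    (hf0 : ∀ i, 0 ≤ f i) (hf1 : ∀ i, f i ≤ 1)
    (hg0 : ∀ i, 0 ≤ g i) (hg1 : ∀ i, g i ≤ 1) :
    |∏ i, f i - ∏ i, g i| ≤ ∑ i, |f i - g i| := by
  induction k with
  | zero => simp
  | succ m ih =>
    rw [Fin.prod_univ_succ, Fin.prod_univ_succ, Fin.sum_univ_succ]
    set P : ℝ := ∏ i : Fin m, f i.succ with hP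
    set Q : ℝ := ∏ i : Fin m, g i.succ with hQ
    have hP0 : 0 ≤ P := Finset.prod_nonneg fun i _ => hf0 _
    have hQ0 : 0 ≤ Q := Finset.prod_nonneg fun i _ => hg0 _
    have hQ1 : Q ≤ 1 := Finset.prod_le_one (fun i _ => hg0 _) (fun i _ => hg1 _)
    have hih := ih (fun i => f i.succ) (fun i => g i.succ)
      (fun i => hf0 _) (fun i => hf1 _) (fun i => hg0 _) (fun i => hg1 _)
    calc |f 0 * P - g 0 * Q|
        = |f 0 * (P - Q) + (f 0 - g 0) * Q| := by ring_nf
      _ ≤ |f 0 * (P - Q)| + |(f 0 - g 0) * Q| := abs_add_le _ _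
      _ = f 0 * |P - Q| + |f 0 - g 0| * Q := by
          rw [abs_mul, abs_mul, abs_of_nonneg (hf0 0), abs_of_nonneg hQ0]
      _ ≤ 1 * |P - Q| + |f 0 - g 0| * 1 := by
          apply add_le_add
          · exact mul_le_mul (hf1 0) le_rfl (abs_nonneg _) (by norm_num)
          · exact mul_le_mul le_rfl hQ1 hQ0 (abs_nonneg _)
      _ = |f 0 - g 0| + |P - Q| := by ring
      _ ≤ |f 0 - g 0| + ∑ i : Fin m, |f i.succ - g i.succ| := by linarith [hih]

/-- **Lemma D.1 (uniform convergence of product Gaussian densities).**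
Let `a > 1/(2π)`, and suppose `v n i ≥ a` for all `n, i` and `v n i → w i` as `n → ∞` for
every `i`. Then the product Gaussian densities `Φ^k_{v(n,·)}` converge to `Φ^k_w`
uniformly in the argument `x ∈ ℝ^k` and in the dimension `k ≥ 1`. -/
theorem prodGaussDensity_uniform_convergence (a : ℝ) (ha : 1 / (2 * Real.pi) < a)
    (v : ℕ → ℕ → ℝ) (w : ℕ → ℝ)
    (hva : ∀ n i, a ≤ v n i)
    (hconv : ∀ i, Tendsto (fun n => v n i) atTop (𝓝 (w i))) :
    ∀ ε : ℝ, 0 < ε → ∃ N : ℕ, ∀ n : ℕ, N ≤ n → ∀ k : ℕ, 1 ≤ k → ∀ x : Fin k → ℝ,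
      |prodGaussDensity (v n) x - prodGaussDensity w x| < ε := by
  intro ε hε
  have hπ := Real.pi_pos
  have ha0 : 0 < a := lt_trans (by positivity) ha
  have h2pa : 1 < 2 * Real.pi * a := by
    rw [div_lt_iff₀ (by positivity)] at ha; nlinarith
  set c : ℝ := 1 / Real.sqrt (2 * Real.pi * a) with hcdef
  have hb1 : 1 < Real.sqrt (2 * Real.pi * a) := by
    rw [show (1:ℝ) = Real.sqrt 1 by simp]
    exact Real.sqrt_lt_sqrt (by norm_num) h2pa
  have hc0 : 0 < c := by rw [hcdef]; positivity
  have hc1 : c < 1 := by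
    rw [hcdef, div_lt_one (by linarith)]; exact hb1
  have hw : ∀ i, a ≤ w i := fun i => ge_of_tendsto' (hconv i) (fun n => hva n i)
  have hprod_le : ∀ (u : ℕ → ℝ), (∀ i, a ≤ u i) → ∀ (k : ℕ) (x : Fin k → ℝ),
      prodGaussDensity u x ≤ c ^ k := by
    intro u hu k x
    unfold prodGaussDensity
    calc ∏ i : Fin k, gaussDensity (u i) (x i) ≤ ∏ _i : Fin k, c :=
        Finset.prod_le_prod (fun i _ => gaussDensity_nonneg _ _)
          (fun i _ => gaussDensity_le a (u i) (x i) ha0 (hu i))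
      _ = c ^ k := by simp
  have hprod_nonneg : ∀ (u : ℕ → ℝ) (k : ℕ) (x : Fin k → ℝ), 0 ≤ prodGaussDensity u x :=
    fun u k x => Finset.prod_nonneg fun i _ => gaussDensity_nonneg _ _
  obtain ⟨K, hK⟩ := exists_pow_lt_of_lt_one (half_pos hε) hc1
  set δ : ℝ := a * ε / (4 * (K + 1)) with hδdef
  have hδ0 : 0 < δ := by rw [hδdef]; positivity
  have hev : ∀ᶠ n in atTop, ∀ i ∈ Finset.range K, |v n i - w i| < δ := by
    rw [eventually_all_finset]
    intro i _
    obtain ⟨Ni, hNi⟩ := Metric.tendsto_atTop.mp (hconv i) δ hδ0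
    exact eventually_atTop.2 ⟨Ni, fun n hn => by simpa [Real.dist_eq] using hNi n hn⟩
  obtain ⟨N, hN⟩ := eventually_atTop.1 hev
  refine ⟨N, fun n hn k hk x => ?_⟩
  by_cases hkK : K ≤ k
  · have h1 := hprod_le (v n) (hva n) k x
    have h2 := hprod_le w hw k x
    have h3 := hprod_nonneg (v n) k x
    have h4 := hprod_nonneg w k x
    have hck : c ^ k ≤ c ^ K := pow_le_pow_of_le_one hc0.le hc1.le hkK
    rw [abs_sub_lt_iff]
    constructor <;> nlinarith
  · push_neg at hkK
    have hfac1 : ∀ (u : ℝ), a ≤ u → ∀ y : ℝ, gaussDensity u y ≤ 1 :=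
      fun u hu y => (gaussDensity_le a u y ha0 hu).trans hc1.le
    have hdiff := prod_abs_sub_le (fun i : Fin k => gaussDensity (v n (i : ℕ)) (x i))
        (fun i : Fin k => gaussDensity (w (i : ℕ)) (x i))
        (fun i => gaussDensity_nonneg _ _) (fun i => hfac1 _ (hva n _) _)
        (fun i => gaussDensity_nonneg _ _) (fun i => hfac1 _ (hw _) _)
    have hterm : ∀ i : Fin k,
        |gaussDensity (v n (i : ℕ)) (x i) - gaussDensity (w (i : ℕ)) (x i)| < 2 / a * δ := by
      intro i
      have hiK : (i : ℕ) ∈ Finset.range K := Finset.mem_range.2 (lt_trans i.isLt hkK)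
      have hvw := hN n hn (i : ℕ) hiK
      calc |gaussDensity (v n (i : ℕ)) (x i) - gaussDensity (w (i : ℕ)) (x i)|
          ≤ 2 / a * |v n (i : ℕ) - w (i : ℕ)| :=
            gaussDensity_diff_le a _ _ _ ha (hva n _) (hw _)
        _ < 2 / a * δ := by
            apply mul_lt_mul_of_pos_left hvw (by positivity)
    have hne : (Finset.univ : Finset (Fin k)).Nonempty :=
      ⟨⟨0, hk⟩, Finset.mem_univ _⟩
    have hsum : ∑ i : Fin k,
        |gaussDensity (v n (i : ℕ)) (x i) - gaussDensity (w (i : ℕ)) (x i)|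
        < (k : ℝ) * (2 / a * δ) := by
      calc ∑ i : Fin k, |gaussDensity (v n (i : ℕ)) (x i) - gaussDensity (w (i : ℕ)) (x i)|
          < ∑ _i : Fin k, (2 / a * δ) :=
            Finset.sum_lt_sum_of_nonempty hne (fun i _ => hterm i)
        _ = (k : ℝ) * (2 / a * δ) := by simp [Finset.sum_const, Finset.card_univ]
    have hδval : 2 / a * δ = ε / (2 * (K + 1)) := by
      rw [hδdef]; field_simp; ring
    have hkle : (k : ℝ) ≤ (K : ℝ) + 1 := by
      have : (k : ℝ) ≤ (K : ℝ) := Nat.cast_le.2 hkK.le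
      linarith
    have hfin : (k : ℝ) * (2 / a * δ) ≤ ε / 2 := by
      rw [hδval]
      have hK1 : (0:ℝ) < (K : ℝ) + 1 := by positivity
      calc (k : ℝ) * (ε / (2 * ((K:ℝ) + 1))) ≤ ((K:ℝ) + 1) * (ε / (2 * ((K:ℝ) + 1))) :=
            mul_le_mul_of_nonneg_right hkle (by positivity)
        _ = ε / 2 * 1 := by field_simp
        _ = ε / 2 := mul_one _
    have : |prodGaussDensity (v n) x - prodGaussDensity w x|
        ≤ ∑ i : Fin k, |gaussDensity (v n (i : ℕ)) (x i) - gaussDensity (w (i : ℕ)) (x i)| := by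
      unfold prodGaussDensity
      exact hdiff
    linarith
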